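/- Let k > 1 and define f_k(z) = ((1+k)/2 − z)^((1+k)/(2k)) · (z + (k−1)/2)^((k−1)/(2k)) for z ∈ [0,1]. Then the function z ↦ f_k(1−z) + ∫_z^1 (1−t)/f_k(t) dt is constant on [0,1]; in particular, for every z ∈ [0,1], f_k(1−z) + ∫_z^1 (1−t)/f_k(t) dt = f_k(0). -/

import Mathlib

/-- For `k > 1` and
`f_k z = ((1+k)/2 - z)^((1+k)/(2k)) · (z + (k-1)/2)^((k-1)/(2k))`,
the expression `f_k (1-z) + ∫_z^1 (1-t)/f_k t dt` is constant on `[0,1]`,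
equal to its value `f_k 0` at `z = 1`. -/
theorem fk_constant_ratio (k : ℝ) (hk : 1 < k) (f : ℝ → ℝ)
    (hf : ∀ z, f z = ((1 + k) / 2 - z) ^ ((1 + k) / (2 * k)) *
                     (z + (k - 1) / 2) ^ ((k - 1) / (2 * k))) :
    ∀ z ∈ Set.Icc (0:ℝ) 1, f (1 - z) + (∫ t in z..1, (1 - t) / f t) = f 0 := by
  have hfe : f = fun z => ((1 + k) / 2 - z) ^ ((1 + k) / (2 * k)) *
      (z + (k - 1) / 2) ^ ((k - 1) / (2 * k)) := funext hf
  subst hfe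
  set a : ℝ := (1 + k) / (2 * k) with ha
  set b : ℝ := (k - 1) / (2 * k) with hb
  have hk0 : (0:ℝ) < k := lt_trans one_pos hk
  have hab : a + b = 1 := by rw [ha, hb]; field_simp; ring
  have hkey : ∀ x : ℝ, -a * (x + (k - 1) / 2) + b * ((1 + k) / 2 - x) = -x := by
    intro x; rw [ha, hb]; field_simp; ring
  clear ha hb
  clear_value a b
  set I : Set ℝ := Set.Ioo ((1 - k) / 2) ((1 + k) / 2) with hI
  have hIopen : IsOpen I := isOpen_Ioo
  set f : ℝ → ℝ := fun z => ((1 + k) / 2 - z) ^ a * (z + (k - 1) / 2) ^ b with hfdef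
  have hA : ∀ x ∈ I, 0 < (1 + k) / 2 - x := fun x hx => by
    simp only [hI, Set.mem_Ioo] at hx; linarith [hx.2]
  have hB : ∀ x ∈ I, 0 < x + (k - 1) / 2 := fun x hx => by
    simp only [hI, Set.mem_Ioo] at hx; linarith [hx.1]
  have hfpos : ∀ x ∈ I, 0 < f x := fun x hx =>
    mul_pos (Real.rpow_pos_of_pos (hA x hx) a) (Real.rpow_pos_of_pos (hB x hx) b)
  have hsub : Set.Icc (0:ℝ) 1 ⊆ I := fun x hx => by
    simp only [hI, Set.mem_Ioo]; simp only [Set.mem_Icc] at hx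
    constructor <;> linarith [hx.1, hx.2]
  have hsym : ∀ x ∈ I, 1 - x ∈ I := fun x hx => by
    simp only [hI, Set.mem_Ioo] at hx ⊢; constructor <;> linarith [hx.1, hx.2]
  -- derivative of f
  have hfderiv : ∀ x ∈ I, HasDerivAt f
      (-x * ((1 + k) / 2 - x) ^ (a - 1) * (x + (k - 1) / 2) ^ (b - 1)) x := by
    intro x hx
    have hAx := hA x hx
    have hBx := hB x hx
    have h1 : HasDerivAt (fun y : ℝ => (1 + k) / 2 - y) (-1) x := by
      simpa using (hasDerivAt_id x).const_sub ((1 + k) / 2)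
    have h2 : HasDerivAt (fun y : ℝ => y + (k - 1) / 2) 1 x := by
      simpa using (hasDerivAt_id x).add_const ((k - 1) / 2)
    have hA' := h1.rpow_const (p := a) (Or.inl hAx.ne')
    have hB' := h2.rpow_const (p := b) (Or.inl hBx.ne')
    have := hA'.mul hB'
    refine this.congr_deriv (Eq.symm ?_)
    have eA : ((1 + k) / 2 - x) ^ a = ((1 + k) / 2 - x) ^ (a - 1) * ((1 + k) / 2 - x) := by
      rw [← Real.rpow_add_one hAx.ne']; ring_nf
    have eB : (x + (k - 1) / 2) ^ b = (x + (k - 1) / 2) ^ (b - 1) * (x + (k - 1) / 2) := by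
      rw [← Real.rpow_add_one hBx.ne']; ring_nf
    rw [eA, eB]
    linear_combination (-(((1 + k) / 2 - x) ^ (a - 1) * ((x + (k - 1) / 2) ^ (b - 1)))) * hkey x
  -- derivative of z ↦ f (1 - z)
  have hg1 : ∀ x ∈ I, HasDerivAt (fun z => f (1 - z)) ((1 - x) / f x) x := by
    intro x hx
    have hx' := hsym x hx
    have h1 : HasDerivAt (fun y : ℝ => 1 - y) (-1) x := by
      simpa using (hasDerivAt_id x).const_sub 1
    have := (hfderiv (1 - x) hx').comp x h1
    refine this.congr_deriv (Eq.symm ?_)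
    have e1 : (1 + k) / 2 - (1 - x) = x + (k - 1) / 2 := by ring
    have e2 : (1 - x) + (k - 1) / 2 = (1 + k) / 2 - x := by ring
    rw [e1, e2]
    have hAx := hA x hx
    have hBx := hB x hx
    have ea : a - 1 = -b := by linarith
    have eb : b - 1 = -a := by linarith
    rw [ea, eb, Real.rpow_neg hBx.le, Real.rpow_neg hAx.le]
    have h1' : ((1 + k) / 2 - x) ^ a ≠ 0 := (Real.rpow_pos_of_pos hAx a).ne'
    have h2' : (x + (k - 1) / 2) ^ b ≠ 0 := (Real.rpow_pos_of_pos hBx b).ne'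
    simp only [hfdef]
    field_simp
  -- continuity of integrand on I
  have hcont : ContinuousOn (fun t => (1 - t) / f t) I := by
    intro x hx
    exact (((continuousAt_const.sub continuousAt_id).div
      (hfderiv x hx).continuousAt (hfpos x hx).ne')).continuousWithinAt
  -- the combined function
  set g : ℝ → ℝ := fun z => f (1 - z) + ∫ t in z..1, (1 - t) / f t with hg
  have h1I : (1:ℝ) ∈ I := hsub (by norm_num)
  have hgderiv : ∀ x ∈ I, HasDerivAt g 0 x := by
    intro x hx
    have huIcc : Set.uIcc x 1 ⊆ I := Set.ordConnected_Ioo.uIcc_subset hx h1I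
    have hint : IntervalIntegrable (fun t => (1 - t) / f t) MeasureTheory.volume x 1 :=
      (hcont.mono huIcc).intervalIntegrable
    have hmeas : StronglyMeasurableAtFilter (fun t => (1 - t) / f t)
        (nhds x) MeasureTheory.volume :=
      ContinuousOn.stronglyMeasurableAtFilter hIopen hcont x hx
    have hca : ContinuousAt (fun t => (1 - t) / f t) x :=
      (continuousAt_const.sub continuousAt_id).div (hfderiv x hx).continuousAt (hfpos x hx).ne'
    have h2 := intervalIntegral.integral_hasDerivAt_left hint hmeas hca
    have := (hg1 x hx).add h2
    refine this.congr_deriv (Eq.symm ?_)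
    ring
  have hgcont : ContinuousOn g (Set.Icc 0 1) :=
    fun x hx => ((hgderiv x (hsub hx)).continuousAt).continuousWithinAt
  have hconst := constant_of_has_deriv_right_zero hgcont
    (fun x hx => ((hgderiv x (hsub (Set.mem_Icc_of_Ico hx))).hasDerivWithinAt))
  intro z hz
  have h1 := hconst z hz
  have h2 := hconst 1 (by norm_num)
  have : g z = g 1 := by rw [h1, h2]
  simpa [hg, intervalIntegral.integral_same] using this
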